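/- arXiv:1908.04125 — 2 statements merged into one kernel-verified Lean document; each statement's English description precedes it below -/
import Mathlib

section
/- Let G be a finite group of order p_1^{β_1} ⋯ p_k^{β_k} (distinct primes p_j) and let [A_1, ..., A_s] be a logarithmic signature for G with all |A_i| ≥ 2. Then Σ_{i=1}^s |A_i| ≥ Σ_{j=1}^k β_j p_j. -/
/-- Sum of prime factors with multiplicity is at most `n`, for `n ≥ 1`. -/
lemma aux_fact_sum_le (n : ℕ) (hn : 1 ≤ n) :
    (n.factorization.sum fun p β => β * p) ≤ n := by
  induction n using Nat.strong_induction_on with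
  | _ n ih =>
    rcases eq_or_lt_of_le hn with h1 | h1
    · simp [← h1]
    · have h2 : 2 ≤ n := h1
      set p := n.minFac with hp
      have hpp : p.Prime := Nat.minFac_prime (by omega)
      have hdvd : p ∣ n := Nat.minFac_dvd n
      obtain ⟨m, hm⟩ := hdvd
      have hm0 : 1 ≤ m := by
        rcases Nat.eq_zero_or_pos m with h | h
        · subst h; simp at hm; omega
        · exact h
      have hfac : n.factorization = p.factorization + m.factorization := by
        rw [hm]; exact Nat.factorization_mul hpp.pos.ne' (by omega)
      have hsum : (n.factorization.sum fun p β => β * p)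
          = p + (m.factorization.sum fun p β => β * p) := by
        rw [hfac, Finsupp.sum_add_index (by simp) (by intros; ring),
          hpp.factorization]
        simp
      have hmn : m < n := by
        have := hpp.two_le
        nlinarith
      have hihm := ih m hmn hm0
      rcases eq_or_lt_of_le hm0 with hm1 | hm2
      · have hmm : m = 1 := hm1.symm
        subst hmm
        have hfz : (1 : ℕ).factorization.sum (fun p β => β * p) = 0 := by simp
        rw [mul_one] at hm
        omega
      · have hp2 := hpp.two_le
        have hpm : p + m ≤ p * m := by nlinarith
        omega

lemma aux_list (l : List ℕ) (h : ∀ a ∈ l, 1 ≤ a) :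
    (l.prod.factorization.sum fun p β => β * p) ≤ l.sum := by
  induction l with
  | nil => simp
  | cons a l ih =>
    have ha : 1 ≤ a := h a (by simp)
    have hl : ∀ b ∈ l, 1 ≤ b := fun b hb => h b (by simp [hb])
    have hlp : 1 ≤ l.prod := List.one_le_prod_of_one_le hl
    rw [List.prod_cons, Nat.factorization_mul (by omega) (by omega),
      Finsupp.sum_add_index (by simp) (by intros; ring)]
    have := aux_fact_sum_le a ha
    have := ih hl
    simp only [List.sum_cons]
    omega

/-- González Vasco–Steinwandt lower bound: a nontrivial logarithmic signature
for a finite group `G` of order `∏ p_j ^ β_j` has length at least `∑ β_j p_j`. -/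
theorem logSig_length_lower_bound
    (G : Type*) [Group G] [Fintype G] (s : ℕ) (A : Fin s → Finset G)
    (hLS : ∀ g : G, ∃! t : Fin s → G, (∀ i, t i ∈ A i) ∧ (List.ofFn t).prod = g)
    (h2 : ∀ i, 2 ≤ (A i).card) :
    ((Fintype.card G).factorization.sum fun p β => β * p) ≤ ∑ i, (A i).card := by
  -- bijection between Π i, A i and G
  have hbij : Function.Bijective
      (fun t : (∀ i, {x // x ∈ A i}) => (List.ofFn fun i => (t i : G)).prod) := by
    constructor
    · intro t t' htt
      obtain ⟨u, hu, huniq⟩ := hLS ((List.ofFn fun i => (t i : G)).prod)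
      have e1 := huniq (fun i => (t i : G)) ⟨fun i => (t i).2, rfl⟩
      have e2 := huniq (fun i => (t' i : G)) ⟨fun i => (t' i).2, htt.symm⟩
      funext i
      have c1 := congrFun e1 i
      have c2 := congrFun e2 i
      exact Subtype.ext (c1.trans c2.symm)
    · intro g
      obtain ⟨u, ⟨hu1, hu2⟩, -⟩ := hLS g
      exact ⟨fun i => ⟨u i, hu1 i⟩, hu2⟩
  have hcard : Fintype.card G = ∏ i, (A i).card := by
    rw [← Fintype.card_of_bijective hbij, Fintype.card_pi]
    simp
  have key := aux_list (List.ofFn fun i => (A i).card) (by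
    intro a ha
    rw [List.mem_ofFn] at ha
    obtain ⟨i, rfl⟩ := ha
    have := h2 i
    show 1 ≤ (A i).card
    omega)
  rw [List.prod_ofFn, List.sum_ofFn] at key
  rw [hcard]
  exact key
end

section
/- Let G be a finite group with subgroups H and K such that H ∩ gKg^{-1} = 1 for all g ∈ G, and suppose G = HgK for a single double coset (n = 1). If H and K each admit a minimal logarithmic signature, then G admits a minimal logarithmic signature; in particular if G = HK with H ∩ K = 1 and |G| = |H||K|, then concatenating an MLS of H with an MLS of K gives an MLS of G. -/
/-- `A` is a logarithmic signature for the group `G`. -/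
def IsLogSig {G : Type*} [Group G] {s : ℕ} (A : Fin s → Finset G) : Prop :=
  ∀ g : G, ∃! t : Fin s → G, (∀ i, t i ∈ A i) ∧ (List.ofFn t).prod = g

/-- The minimal possible length `∑ β_j p_j` for a logarithmic signature of a
group of order `m = ∏ p_j ^ β_j`. -/
def minLSLength (m : ℕ) : ℕ := m.factorization.sum fun p β => β * p

/-- `G` has a minimal logarithmic signature. -/
def HasMLS (G : Type*) [Group G] [Finite G] : Prop :=
  ∃ s : ℕ, ∃ A : Fin s → Finset G,
    IsLogSig A ∧ ∑ i, (A i).card = minLSLength (Nat.card G)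

lemma minLSLength_mul {m n : ℕ} (hm : m ≠ 0) (hn : n ≠ 0) :
    minLSLength (m * n) = minLSLength m + minLSLength n := by
  unfold minLSLength
  rw [Nat.factorization_mul hm hn]
  exact Finsupp.sum_add_index' (fun p => zero_mul p) (fun p b₁ b₂ => add_mul b₁ b₂ p)

lemma coe_ofFn_prod {G : Type*} [Group G] (H : Subgroup G) {s : ℕ} (t : Fin s → H) :
    (List.ofFn fun i => ((t i : G))).prod = (((List.ofFn t).prod : H) : G) := by
  rw [show (List.ofFn fun i => ((t i : G))) = (List.ofFn t).map H.subtype by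
    rw [List.map_ofFn]; rfl]
  exact (List.ofFn t).prod_hom H.subtype

/-- The `n = 1` case of the Lempken–van Trung construction: if
`H ∩ gKg⁻¹ = 1` for all `g ∈ G`, `G` is a single double coset `H g₀ K`, and
`H` and `K` have minimal logarithmic signatures, then so does `G`. -/
theorem hasMLS_of_single_double_coset
    (G : Type*) [Group G] [Finite G] (H K : Subgroup G)
    (hdisj : ∀ g : G, ∀ x : G, x ∈ H → (∃ k ∈ K, x = g * k * g⁻¹) → x = 1)
    (g₀ : G) (hcoset : ∀ x : G, ∃ h ∈ H, ∃ k ∈ K, x = h * g₀ * k)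
    (hH : HasMLS H) (hK : HasMLS K) : HasMLS G := by
  classical
  -- uniqueness of the factorization g = h * k
  have huniq : ∀ h h' k k' : G, h ∈ H → h' ∈ H → k ∈ K → k' ∈ K →
      h * k = h' * k' → h = h' ∧ k = k' := by
    intro h h' k k' hh hh' hk hk' heq
    have hx : h'⁻¹ * h = k' * k⁻¹ := by
      have : h'⁻¹ * (h * k) * k⁻¹ = h'⁻¹ * (h' * k') * k⁻¹ := by rw [heq]
      simpa [mul_assoc] using this
    have hx1 : h'⁻¹ * h = 1 := by
      refine hdisj 1 (h'⁻¹ * h) (H.mul_mem (H.inv_mem hh') hh)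
        ⟨k' * k⁻¹, K.mul_mem hk' (K.inv_mem hk), by simpa using hx⟩
    constructor
    · exact (inv_mul_eq_one.mp hx1).symm
    · have : k' * k⁻¹ = 1 := hx ▸ hx1
      exact (mul_inv_eq_one.mp this).symm
  -- existence of the factorization g = h * k
  have hHK : ∀ x : G, ∃ h ∈ H, ∃ k ∈ K, x = h * k := by
    intro x
    obtain ⟨h₀, hh₀, k₀, hk₀, h1⟩ := hcoset 1
    have hg₀ : g₀ = h₀⁻¹ * k₀⁻¹ := by
      have : h₀ * g₀ * k₀ = 1 := h1.symm
      have h2 := congrArg (fun y => h₀⁻¹ * y * k₀⁻¹) this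
      simpa [mul_assoc] using h2
    obtain ⟨h, hh, k, hk, hx⟩ := hcoset x
    refine ⟨h * h₀⁻¹, H.mul_mem hh (H.inv_mem hh₀), k₀⁻¹ * k,
      K.mul_mem (K.inv_mem hk₀) hk, ?_⟩
    rw [hx, hg₀]; group
  obtain ⟨sH, A, hA, cardA⟩ := hH
  obtain ⟨sK, B, hB, cardB⟩ := hK
  -- cardinality
  have hbij : Function.Bijective (fun p : H × K => (p.1 : G) * p.2) := by
    constructor
    · rintro ⟨⟨h, hh⟩, ⟨k, hk⟩⟩ ⟨⟨h', hh'⟩, ⟨k', hk'⟩⟩ heq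
      obtain ⟨e1, e2⟩ := huniq h h' k k' hh hh' hk hk' heq
      simp only [Prod.mk.injEq, Subtype.mk.injEq]
      exact ⟨e1, e2⟩
    · intro g
      obtain ⟨h, hh, k, hk, rfl⟩ := hHK g
      exact ⟨(⟨h, hh⟩, ⟨k, hk⟩), rfl⟩
  have hcard : Nat.card G = Nat.card H * Nat.card K := by
    rw [← Nat.card_prod]
    exact (Nat.card_eq_of_bijective _ hbij).symm
  -- the concatenated blocks
  set D : Fin (sH + sK) → Finset G :=
    Fin.append (fun i => (A i).image (fun h : H => (h : G)))
      (fun j => (B j).image (fun k : K => (k : G))) with hD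
  refine ⟨sH + sK, D, ?_, ?_⟩
  · intro g
    obtain ⟨h, hh, k, hk, rfl⟩ := hHK g
    obtain ⟨tH, ⟨htHmem, htHprod⟩, htHuniq⟩ := hA ⟨h, hh⟩
    obtain ⟨tK, ⟨htKmem, htKprod⟩, htKuniq⟩ := hB ⟨k, hk⟩
    refine ⟨Fin.append (fun i => ((tH i : G))) (fun j => ((tK j : G))), ⟨?_, ?_⟩, ?_⟩
    · intro i
      refine Fin.addCases (fun i => ?_) (fun j => ?_) i
      · rw [hD, Fin.append_left, Fin.append_left]
        exact Finset.mem_image_of_mem _ (htHmem i)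
      · rw [hD, Fin.append_right, Fin.append_right]
        exact Finset.mem_image_of_mem _ (htKmem j)
    · rw [List.ofFn_add, List.prod_append]
      simp only [Fin.append_left, Fin.append_left', Fin.append_right]
      rw [coe_ofFn_prod, coe_ofFn_prod, htHprod, htKprod]
    · rintro t' ⟨ht'mem, ht'prod⟩
      have hmemH : ∀ i : Fin sH, ∃ a : H, a ∈ A i ∧ (a : G) = t' (Fin.castAdd sK i) := by
        intro i
        have := ht'mem (Fin.castAdd sK i)
        rw [hD, Fin.append_left] at this
        simpa [Finset.mem_image] using this
      have hmemK : ∀ j : Fin sK, ∃ b : K, b ∈ B j ∧ (b : G) = t' (Fin.natAdd sH j) := by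
        intro j
        have := ht'mem (Fin.natAdd sH j)
        rw [hD, Fin.append_right] at this
        simpa [Finset.mem_image] using this
      choose uH huHmem huHcoe using hmemH
      choose uK huKmem huKcoe using hmemK
      have ht' : t' = Fin.append (fun i => ((uH i : G))) (fun j => ((uK j : G))) := by
        funext i
        refine Fin.addCases (fun i => ?_) (fun j => ?_) i
        · rw [Fin.append_left, huHcoe]
        · rw [Fin.append_right, huKcoe]
      have hprod' : (((List.ofFn uH).prod : H) : G) * (((List.ofFn uK).prod : K) : G)
          = h * k := by
        rw [← coe_ofFn_prod, ← coe_ofFn_prod, ← List.prod_append, ← ht'prod, ht',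
          List.ofFn_add]
        simp only [Fin.append_left, Fin.append_left', Fin.append_right]
      obtain ⟨e1, e2⟩ := huniq _ h _ k ((List.ofFn uH).prod).2 hh ((List.ofFn uK).prod).2 hk
        hprod'
      have euH : uH = tH := htHuniq uH ⟨huHmem, Subtype.ext e1⟩
      have euK : uK = tK := htKuniq uK ⟨huKmem, Subtype.ext e2⟩
      rw [ht', euH, euK]
  · rw [Fin.sum_univ_add]
    have hcA : ∀ i, ((fun i => (A i).image (fun h : H => (h : G))) i).card = (A i).card :=
      fun i => Finset.card_image_of_injective _ Subtype.val_injective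
    have hcB : ∀ j, ((fun j => (B j).image (fun k : K => (k : G))) j).card = (B j).card :=
      fun j => Finset.card_image_of_injective _ Subtype.val_injective
    simp only [hD, Fin.append_left, Fin.append_right, hcA, hcB]
    rw [cardA, cardB, hcard,
      minLSLength_mul Nat.card_pos.ne' Nat.card_pos.ne']
end
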